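/- Let B₁, B₂, B₃ be 2×2 unitary matrices. Suppose there exists a unit vector |Δ⟩ ∈ ℂ² such that g₁ = |⟨Δ|B₁†B₂|Δ⟩|², g₂ = |⟨Δ|B₂†B₃|Δ⟩|², g₃ = |⟨Δ|B₃†B₁|Δ⟩|² satisfy g₁+g₂+g₃ < 1 and (g₁+g₂+g₃−1)² ≥ 4g₁g₂g₃. Then m₁ = |Tr(B₁†B₂)|²/4, m₂ = |Tr(B₂†B₃)|²/4, m₃ = |Tr(B₃†B₁)|²/4 satisfy m₁+m₂+m₃ < 1 and (m₁+m₂+m₃−1)² ≥ 4m₁m₂m₃. -/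

import Mathlib

open Matrix Complex

lemma key_trace_le (U : Matrix (Fin 2) (Fin 2) ℂ)
    (hU : U ∈ Matrix.unitaryGroup (Fin 2) ℂ)
    (Δ : Fin 2 → ℂ) (hΔ : star Δ ⬝ᵥ Δ = 1) :
    ‖U.trace‖ ^ 2 / 4 ≤ ‖star Δ ⬝ᵥ U.mulVec Δ‖ ^ 2 := by
  obtain ⟨h1, h2⟩ := hU
  rw [Matrix.star_eq_conjTranspose] at h1 h2
  set a := U 0 0 with ha
  set b := U 0 1 with hb
  set c := U 1 0 with hc0
  set d := U 1 1 with hd0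
  have e1 : (starRingEnd ℂ) a * a + (starRingEnd ℂ) c * c = 1 := by
    have := congrFun (congrFun h1 0) 0
    simpa [Matrix.mul_apply, Fin.sum_univ_two, Matrix.conjTranspose_apply, Matrix.one_apply] using this
  have e2 : (starRingEnd ℂ) a * b + (starRingEnd ℂ) c * d = 0 := by
    have := congrFun (congrFun h1 0) 1
    simpa [Matrix.mul_apply, Fin.sum_univ_two, Matrix.conjTranspose_apply, Matrix.one_apply] using this
  have e3 : c * (starRingEnd ℂ) a + d * (starRingEnd ℂ) b = 0 := by
    have := congrFun (congrFun h2 1) 0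
    simpa [Matrix.mul_apply, Fin.sum_univ_two, Matrix.conjTranspose_apply, Matrix.one_apply] using this
  have e4 : a * (starRingEnd ℂ) a + b * (starRingEnd ℂ) b = 1 := by
    have := congrFun (congrFun h2 0) 0
    simpa [Matrix.mul_apply, Fin.sum_univ_two, Matrix.conjTranspose_apply, Matrix.one_apply] using this
  set δ := U.det with hδdef
  have hdet : δ = a * d - b * c := by rw [hδdef, Matrix.det_fin_two]
  have hd : d = δ * (starRingEnd ℂ) a := by
    rw [hdet]; linear_combination (-d) * e1 + c * e2
  have hc : c = -δ * (starRingEnd ℂ) b := by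
    rw [hdet]; linear_combination (-c) * e4 + a * e3
  obtain ⟨μ, hμ⟩ := IsAlgClosed.exists_pow_nat_eq δ (n := 2) (by norm_num)
  have habsδ : ‖δ‖ = 1 := by
    have hdet1 : (starRingEnd ℂ) δ * δ = 1 := by
      have := congrArg Matrix.det h1
      rw [Matrix.det_mul, Matrix.det_conjTranspose, Matrix.det_one, Complex.star_def] at this
      exact this
    have h2' : ‖δ‖ * ‖δ‖ = 1 := by
      have := congrArg (‖·‖) hdet1
      rw [norm_mul, Complex.norm_conj] at this
      simpa using this
    nlinarith [norm_nonneg δ]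
  have habsμ : ‖μ‖ = 1 := by
    have h2' : ‖μ‖ ^ 2 = 1 := by rw [← norm_pow, hμ, habsδ]
    nlinarith [norm_nonneg μ]
  have hμμ : (starRingEnd ℂ) μ * μ = 1 := by
    rw [mul_comm, Complex.mul_conj, Complex.normSq_eq_norm_sq, habsμ]; norm_num
  set x := Δ 0 with hx
  set y := Δ 1 with hy
  have hS : (starRingEnd ℂ) x * x + (starRingEnd ℂ) y * y = 1 := by
    simpa [dotProduct, Fin.sum_univ_two, Pi.star_apply] using hΔ
  set z := star Δ ⬝ᵥ U.mulVec Δ with hz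
  have hzexp : z = (starRingEnd ℂ) x * (a * x + b * y) + (starRingEnd ℂ) y * (c * x + d * y) := by
    simp only [hz, dotProduct, Matrix.mulVec, Fin.sum_univ_two, Pi.star_apply, RCLike.star_def]
    try rfl
    try ring
  have htr : U.trace = a + d := by rw [Matrix.trace_fin_two]
  set w := (starRingEnd ℂ) μ * z with hw
  have hkey : (starRingEnd ℂ) μ * U.trace = w + (starRingEnd ℂ) w := by
    rw [htr, hw, hzexp, hd, hc, ← hμ]
    simp only [_root_.map_mul, map_add, map_neg, map_pow, Complex.conj_conj]
    linear_combination ((starRingEnd ℂ) μ * b * (starRingEnd ℂ) x * y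
        + μ * (starRingEnd ℂ) b * (starRingEnd ℂ) y * x
        + μ * (starRingEnd ℂ) a * (starRingEnd ℂ) x * x
        - (starRingEnd ℂ) μ * a * (starRingEnd ℂ) y * y
        + μ * (starRingEnd ℂ) a
        - μ * (starRingEnd ℂ) a * ((starRingEnd ℂ) x * x + y * (starRingEnd ℂ) y)) * hμμ
      + (-(starRingEnd ℂ) μ * a - μ * (starRingEnd ℂ) a) * hS
  have hble : ‖U.trace‖ ≤ 2 * ‖z‖ := by
    have h1' : ‖U.trace‖ = ‖(starRingEnd ℂ) μ * U.trace‖ := by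
      rw [norm_mul, Complex.norm_conj, habsμ, one_mul]
    have hwz : ‖w‖ = ‖z‖ := by
      rw [hw, norm_mul, Complex.norm_conj, habsμ, one_mul]
    have hre : w + (starRingEnd ℂ) w = ((2 * w.re : ℝ) : ℂ) := by
      rw [Complex.add_conj]
    rw [h1', hkey, hre, Complex.norm_real, Real.norm_eq_abs, ← hwz]
    have := Complex.abs_re_le_norm w
    rw [abs_mul]
    have h2 : |(2 : ℝ)| = 2 := by norm_num
    rw [h2]
    linarith
  nlinarith [norm_nonneg U.trace, norm_nonneg z]

theorem single_probe_implies_maxEntangled_probe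
    (B₁ B₂ B₃ : Matrix (Fin 2) (Fin 2) ℂ)
    (hB₁ : B₁ ∈ Matrix.unitaryGroup (Fin 2) ℂ)
    (hB₂ : B₂ ∈ Matrix.unitaryGroup (Fin 2) ℂ)
    (hB₃ : B₃ ∈ Matrix.unitaryGroup (Fin 2) ℂ)
    (Δ : Fin 2 → ℂ) (hΔ : star Δ ⬝ᵥ Δ = 1) :
    let g₁ := ‖(star Δ ⬝ᵥ ((B₁ᴴ * B₂).mulVec Δ))‖ ^ 2
    let g₂ := ‖(star Δ ⬝ᵥ ((B₂ᴴ * B₃).mulVec Δ))‖ ^ 2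
    let g₃ := ‖(star Δ ⬝ᵥ ((B₃ᴴ * B₁).mulVec Δ))‖ ^ 2
    let m₁ := ‖((B₁ᴴ * B₂).trace)‖ ^ 2 / 4
    let m₂ := ‖((B₂ᴴ * B₃).trace)‖ ^ 2 / 4
    let m₃ := ‖((B₃ᴴ * B₁).trace)‖ ^ 2 / 4
    g₁ + g₂ + g₃ < 1 → (g₁ + g₂ + g₃ - 1) ^ 2 ≥ 4 * g₁ * g₂ * g₃ →
      m₁ + m₂ + m₃ < 1 ∧ (m₁ + m₂ + m₃ - 1) ^ 2 ≥ 4 * m₁ * m₂ * m₃ := by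
  intro g₁ g₂ g₃ m₁ m₂ m₃ hg1 hg2
  have mem₁ : B₁ᴴ * B₂ ∈ Matrix.unitaryGroup (Fin 2) ℂ := by
    rw [← Matrix.star_eq_conjTranspose]
    exact mul_mem (Unitary.star_mem hB₁) hB₂
  have mem₂ : B₂ᴴ * B₃ ∈ Matrix.unitaryGroup (Fin 2) ℂ := by
    rw [← Matrix.star_eq_conjTranspose]
    exact mul_mem (Unitary.star_mem hB₂) hB₃
  have mem₃ : B₃ᴴ * B₁ ∈ Matrix.unitaryGroup (Fin 2) ℂ := by
    rw [← Matrix.star_eq_conjTranspose]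
    exact mul_mem (Unitary.star_mem hB₃) hB₁
  have k₁ : m₁ ≤ g₁ := key_trace_le (B₁ᴴ * B₂) mem₁ Δ hΔ
  have k₂ : m₂ ≤ g₂ := key_trace_le (B₂ᴴ * B₃) mem₂ Δ hΔ
  have k₃ : m₃ ≤ g₃ := key_trace_le (B₃ᴴ * B₁) mem₃ Δ hΔ
  have hm₁ : 0 ≤ m₁ := by positivity
  have hm₂ : 0 ≤ m₂ := by positivity
  have hm₃ : 0 ≤ m₃ := by positivity
  constructor
  · linarith
  · have hg₁ : (0:ℝ) ≤ g₁ := le_trans hm₁ k₁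
    have hg₂ : (0:ℝ) ≤ g₂ := le_trans hm₂ k₂
    have q12 : m₁ * m₂ ≤ g₁ * g₂ := mul_le_mul k₁ k₂ hm₂ hg₁
    have q : m₁ * m₂ * m₃ ≤ g₁ * g₂ * g₃ :=
      mul_le_mul q12 k₃ hm₃ (mul_nonneg hg₁ hg₂)
    have p1 : 4 * m₁ * m₂ * m₃ ≤ 4 * g₁ * g₂ * g₃ := by nlinarith [q]
    have p2 : (1 - (g₁ + g₂ + g₃)) ^ 2 ≤ (1 - (m₁ + m₂ + m₃)) ^ 2 := by nlinarith
    nlinarith
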